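/- Let m ≥ 1 and let λ_1,…,λ_m be complex numbers such that λ_1³,…,λ_m³ are nonzero and pairwise distinct, and set f(z) = ∏_{j=1}^m (1−λ_j³ z³) ∈ ℂ((z)). Then the ℂ-linear span of the family S₁ = {z^{3m−3i} : i ≥ 0} ∪ {z^{−1−3i} f(z) : i ≥ 0} ∪ {z^{−3m−2−3i} f(z)² : i ≥ 0} is a point of the Sato Grassmannian UGM. -/

import Mathlib

set_option synthInstance.maxHeartbeats 1000000
set_option maxHeartbeats 1000000

noncomputable section

/- Shortcut instances to speed up instance search for submodules of `ℂ((z))`. -/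
instance (U : Submodule ℂ (LaurentSeries ℂ)) : AddCommGroup U := inferInstance
instance (U : Submodule ℂ (LaurentSeries ℂ)) : Module ℂ U := inferInstance

/-- The variable `z` in the field of formal Laurent series `ℂ((z))`. -/
def zL : LaurentSeries ℂ := HahnSeries.single 1 1

/-- Truncation: keep only the coefficients of nonpositive powers of `z`.
This is the projection onto `V_φ = ℂ[z⁻¹]` along `V₀ = zℂ[[z]]`. -/
def trunc : LaurentSeries ℂ →ₗ[ℂ] LaurentSeries ℂ where
  toFun f :=
    { coeff := fun n => if n ≤ 0 then f.coeff n else 0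
      isPWO_support' := f.isPWO_support.mono (by
        intro n hn
        simp only [Function.mem_support] at hn ⊢
        intro h
        apply hn
        simp [h]) }
  map_add' f g := by
    ext n
    by_cases h : n ≤ 0 <;> simp [HahnSeries.coeff_add, h]
  map_smul' c f := by
    ext n
    by_cases h : n ≤ 0 <;> simp [HahnSeries.coeff_smul, h]

/-- `V_φ = ℂ[z⁻¹]`, realized as the range of the truncation map. -/
def Vphi : Submodule ℂ (LaurentSeries ℂ) := LinearMap.range trunc

/-- The projection `π : ℂ((z)) → V_φ` restricted to a subspace `U`. -/
def projU (U : Submodule ℂ (LaurentSeries ℂ)) : U →ₗ[ℂ] Vphi :=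
  trunc.rangeRestrict.comp U.subtype

/-- The Sato Grassmannian: subspaces `U ⊆ ℂ((z))` such that the kernel and the
cokernel of `π|_U : U → V_φ` are finite dimensional of the same dimension. -/
def UGM : Set (Submodule ℂ (LaurentSeries ℂ)) :=
  {U | FiniteDimensional ℂ (LinearMap.ker (projU U)) ∧
       FiniteDimensional ℂ (Vphi ⧸ LinearMap.range (projU U)) ∧
       Module.finrank ℂ (LinearMap.ker (projU U)) =
         Module.finrank ℂ (Vphi ⧸ LinearMap.range (projU U))}

/-- `f(z) = ∏_{j=1}^m (1 - λ_j³ z³)` in `ℂ((z))`. -/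
def fSing (m : ℕ) (lam : Fin m → ℂ) : LaurentSeries ℂ :=
  ∏ j : Fin m, (1 - algebraMap ℂ (LaurentSeries ℂ) (lam j ^ 3) * zL ^ 3)

/-- The basis (9.4) of `ι(U_a(X^aff_sing))`:
`z^{3m-3i}`, `z^{-1-3i}f(z)`, `z^{-3m-2-3i}f(z)²` for `i ≥ 0`. -/
def S1 (m : ℕ) (lam : Fin m → ℂ) : Set (LaurentSeries ℂ) :=
  (Set.range fun i : ℕ => zL ^ (3 * (m : ℤ) - 3 * (i : ℤ))) ∪
    (Set.range fun i : ℕ => zL ^ (-1 - 3 * (i : ℤ)) * fSing m lam) ∪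
    (Set.range fun i : ℕ => zL ^ (-3 * (m : ℤ) - 2 - 3 * (i : ℤ)) * fSing m lam ^ 2)

namespace SatoAux

open HahnSeries

abbrev LS := LaurentSeries ℂ

def coeffLM (n : ℤ) : LS →ₗ[ℂ] ℂ where
  toFun f := f.coeff n
  map_add' f g := by simp [HahnSeries.coeff_add]
  map_smul' c f := by simp [HahnSeries.coeff_smul]

@[simp] lemma coeffLM_apply (n : ℤ) (f : LS) : coeffLM n f = f.coeff n := rfl

lemma zL_zpow (n : ℤ) : zL ^ n = (single n 1 : LS) := by
  show (single (1:ℤ) (1:ℂ)) ^ n = _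
  exact (RatFunc.single_zpow n).symm

lemma zL_pow3 : zL ^ (3:ℕ) = (single (3:ℤ) 1 : LS) := by
  show (single (1:ℤ) (1:ℂ)) ^ (3:ℕ) = _
  rw [single_pow]
  norm_num

lemma coeff_sum {ι : Type*} (s : Finset ι) (v : ι → LS) (n : ℤ) :
    (∑ i ∈ s, v i).coeff n = ∑ i ∈ s, (v i).coeff n :=
  map_sum (coeffLM n) v s

lemma finsupp_sum_coeff {ι : Type*} (c : ι →₀ ℂ) (v : ι → LS) (n : ℤ) :
    (c.sum fun i a => a • v i).coeff n = c.sum fun i a => a * (v i).coeff n := by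
  have h := map_finsuppSum (coeffLM n) c (fun i a => a • v i)
  simpa [coeffLM, HahnSeries.coeff_smul] using h

def Pol3 (f : LS) : Prop := f.coeff 0 = 1 ∧ ∀ n : ℤ, f.coeff n ≠ 0 → 0 ≤ n ∧ (3:ℤ) ∣ n

lemma pol3_one : Pol3 (1 : LS) := by
  constructor
  · simp
  · intro n hn
    rw [HahnSeries.coeff_one] at hn
    by_cases h : n = 0
    · subst h; simp
    · simp [h] at hn

lemma pol3_step (c : ℂ) {f : LS} (hf : Pol3 f) : Pol3 ((1 - single 3 c) * f) := by
  have hcoeff : ∀ k : ℤ, ((1 - single 3 c) * f).coeff k = f.coeff k - c * f.coeff (k - 3) := by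
    intro k
    rw [sub_mul, one_mul, HahnSeries.coeff_sub]
    congr 1
    have h := HahnSeries.coeff_single_mul_add (r := c) (x := f) (a := k - 3) (b := 3)
    rw [sub_add_cancel] at h
    exact h
  obtain ⟨h0, hsupp⟩ := hf
  constructor
  · rw [hcoeff, h0]
    have hz : f.coeff (0 - 3) = 0 := by
      by_contra h
      have := (hsupp _ h).1
      omega
    rw [hz]; ring
  · intro n hn
    rw [hcoeff] at hn
    have h : f.coeff n ≠ 0 ∨ f.coeff (n - 3) ≠ 0 := by
      by_contra h
      push_neg at h
      rw [h.1, h.2] at hn; simp at hn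
    rcases h with h | h
    · exact hsupp n h
    · obtain ⟨h1, h2⟩ := hsupp _ h
      refine ⟨by omega, ?_⟩
      omega

lemma pol3_pow (c : ℂ) (e : ℕ) {f : LS} (hf : Pol3 f) : Pol3 ((1 - single 3 c) ^ e * f) := by
  induction e with
  | zero => simpa using hf
  | succ e ih =>
    rw [pow_succ, mul_comm ((1 - single 3 c) ^ e), mul_assoc]
    exact pol3_step c ih

lemma pol3_prod {ι : Type*} [DecidableEq ι] (s : Finset ι) (c : ι → ℂ) (e : ℕ) :
    Pol3 (∏ j ∈ s, (1 - single 3 (c j)) ^ e) := by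
  induction s using Finset.induction with
  | empty => simpa using pol3_one
  | @insert a s h ih =>
    rw [Finset.prod_insert h]
    exact pol3_pow (c a) e ih


lemma single_one_mul_coeff {a k : ℤ} {f : LS} :
    ((single a 1 : LS) * f).coeff k = f.coeff (k - a) := by
  have h := HahnSeries.coeff_single_mul_add (r := (1:ℂ)) (x := f) (a := k - a) (b := a)
  rw [sub_add_cancel] at h
  simpa using h

lemma fSing_eq (m : ℕ) (lam : Fin m → ℂ) :
    fSing m lam = ∏ j : Fin m, (1 - single (3:ℤ) (lam j ^ 3)) := by
  unfold fSing
  apply Finset.prod_congr rfl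
  intro j _
  congr 1
  rw [zL_pow3]
  rw [show algebraMap ℂ (LaurentSeries ℂ) (lam j ^ 3) = (single (0:ℤ) (lam j ^ 3) : LS) by
    rw [HahnSeries.algebraMap_apply' (Γ := ℤ) (R := ℂ), PowerSeries.algebraMap_apply,
      Algebra.algebraMap_self, RingHom.id_apply, HahnSeries.ofPowerSeries_C]
    rfl]
  rw [HahnSeries.single_mul_single, zero_add, mul_one]

lemma pol3_F (m : ℕ) (lam : Fin m → ℂ) : Pol3 (fSing m lam) := by
  rw [fSing_eq]
  have h := pol3_prod (Finset.univ : Finset (Fin m)) (fun j => lam j ^ 3) 1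
  simpa using h

lemma pol3_F2 (m : ℕ) (lam : Fin m → ℂ) : Pol3 (fSing m lam ^ 2) := by
  rw [fSing_eq, ← Finset.prod_pow]
  exact pol3_prod _ _ 2

def gIdx (m : ℕ) (lam : Fin m → ℂ) : ℕ ⊕ (ℕ ⊕ ℕ) → LS
  | .inl i => single (3 * (m:ℤ) - 3 * (i:ℤ)) 1
  | .inr (.inl i) => single (-1 - 3 * (i:ℤ)) 1 * fSing m lam
  | .inr (.inr i) => single (-3 * (m:ℤ) - 2 - 3 * (i:ℤ)) 1 * fSing m lam ^ 2

def oIdx (m : ℕ) : ℕ ⊕ (ℕ ⊕ ℕ) → ℤ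
  | .inl i => 3 * (m:ℤ) - 3 * (i:ℤ)
  | .inr (.inl i) => -1 - 3 * (i:ℤ)
  | .inr (.inr i) => -3 * (m:ℤ) - 2 - 3 * (i:ℤ)

lemma S1_eq (m : ℕ) (lam : Fin m → ℂ) : S1 m lam = Set.range (gIdx m lam) := by
  unfold S1
  ext x
  simp only [Set.mem_union, Set.mem_range]
  constructor
  · rintro ((⟨i, rfl⟩ | ⟨i, rfl⟩) | ⟨i, rfl⟩)
    · exact ⟨.inl i, by simp [gIdx, zL_zpow]⟩
    · exact ⟨.inr (.inl i), by simp [gIdx, zL_zpow]⟩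
    · exact ⟨.inr (.inr i), by simp [gIdx, zL_zpow]⟩
  · rintro ⟨(i | i | i), rfl⟩
    · exact Or.inl (Or.inl ⟨i, by simp [gIdx, zL_zpow]⟩)
    · exact Or.inl (Or.inr ⟨i, by simp [gIdx, zL_zpow]⟩)
    · exact Or.inr ⟨i, by simp [gIdx, zL_zpow]⟩

lemma oIdx_inj (m : ℕ) : Function.Injective (oIdx m) := by
  rintro (i | i | i) (j | j | j) h <;> simp only [oIdx] at h <;>
    first
      | exact congrArg Sum.inl (by omega : i = j)
      | exact congrArg (fun t => Sum.inr (Sum.inl t)) (by omega : i = j)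
      | exact congrArg (fun t => Sum.inr (Sum.inr t)) (by omega : i = j)
      | exact absurd h (by omega)

lemma g_coeff_self (m : ℕ) (lam : Fin m → ℂ) (idx : ℕ ⊕ (ℕ ⊕ ℕ)) :
    (gIdx m lam idx).coeff (oIdx m idx) = 1 := by
  rcases idx with i | i | i
  · exact coeff_single_same _ _
  · rw [show gIdx m lam (.inr (.inl i)) = single (-1 - 3 * (i:ℤ)) 1 * fSing m lam from rfl,
      single_one_mul_coeff]
    rw [show oIdx m (.inr (.inl i)) - (-1 - 3 * (i:ℤ)) = 0 by simp [oIdx]]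
    exact (pol3_F m lam).1
  · rw [show gIdx m lam (.inr (.inr i)) = single (-3 * (m:ℤ) - 2 - 3 * (i:ℤ)) 1 * fSing m lam ^ 2 from rfl,
      single_one_mul_coeff]
    rw [show oIdx m (.inr (.inr i)) - (-3 * (m:ℤ) - 2 - 3 * (i:ℤ)) = 0 by simp [oIdx]]
    exact (pol3_F2 m lam).1

lemma g_coeff_ne (m : ℕ) (lam : Fin m → ℂ) {idx : ℕ ⊕ (ℕ ⊕ ℕ)} {k : ℤ}
    (h : (gIdx m lam idx).coeff k ≠ 0) :
    oIdx m idx ≤ k ∧ k % 3 = oIdx m idx % 3 := by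
  rcases idx with i | i | i
  · have hk : k = 3 * (m:ℤ) - 3 * (i:ℤ) := by
      by_contra hc
      rw [show gIdx m lam (.inl i) = single (3 * (m:ℤ) - 3 * (i:ℤ)) 1 from rfl,
        coeff_single_of_ne hc] at h
      exact h rfl
    simp only [oIdx]
    omega
  · rw [show gIdx m lam (.inr (.inl i)) = single (-1 - 3 * (i:ℤ)) 1 * fSing m lam from rfl,
      single_one_mul_coeff] at h
    obtain ⟨h1, h2⟩ := (pol3_F m lam).2 _ h
    simp only [oIdx]
    omega
  · rw [show gIdx m lam (.inr (.inr i)) = single (-3 * (m:ℤ) - 2 - 3 * (i:ℤ)) 1 * fSing m lam ^ 2 from rfl,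
      single_one_mul_coeff] at h
    obtain ⟨h1, h2⟩ := (pol3_F2 m lam).2 _ h
    simp only [oIdx]
    omega


lemma trunc_coeff (f : LS) (n : ℤ) : (trunc f).coeff n = if n ≤ 0 then f.coeff n else 0 := rfl

lemma trunc_eq_self {f : LS} (h : ∀ n, f.coeff n ≠ 0 → n ≤ 0) : trunc f = f := by
  ext n
  rw [trunc_coeff]
  split_ifs with hn
  · rfl
  · by_contra hc
    exact hn (h n fun e => hc e.symm)

lemma trunc_single_nonpos {e : ℤ} (he : e ≤ 0) : trunc (single e (1:ℂ) : LS) = single e 1 := by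
  apply trunc_eq_self
  intro n hn
  by_contra hc
  have : n ≠ e := by omega
  rw [coeff_single_of_ne this] at hn
  exact hn rfl

lemma trunc_single_pos {e : ℤ} (he : 0 < e) : trunc (single e (1:ℂ) : LS) = 0 := by
  ext n
  rw [trunc_coeff, HahnSeries.coeff_zero]
  split_ifs with hn
  · exact coeff_single_of_ne (by omega)
  · rfl

lemma sum_coeff_eq_single {ι : Type*} [DecidableEq ι] (c : ι →₀ ℂ) (v : ι → LS) (n : ℤ)
    (idx : ι) (h : ∀ jdx ∈ c.support, jdx ≠ idx → (v jdx).coeff n = 0)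
    (hself : (v idx).coeff n = 1) :
    (c.sum fun i a => a • v i).coeff n = c idx := by
  rw [finsupp_sum_coeff, Finsupp.sum_eq_single idx]
  · rw [hself, mul_one]
  · intro b hb hbne
    rw [h b (Finsupp.mem_support_iff.mpr hb) hbne, mul_zero]
  · intro _; rw [zero_mul]

lemma finsum_single_coeff_self {r : ℕ} (a : Fin r → ℂ) (e : Fin r → ℤ)
    (he : Function.Injective e) (k : Fin r) :
    (∑ j, a j • (single (e j) 1 : LS)).coeff (e k) = a k := by
  rw [coeff_sum, Finset.sum_eq_single k]
  · rw [HahnSeries.coeff_smul, coeff_single_same]; simp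
  · intro j _ hj
    have hne : e k ≠ e j := fun h => hj (he h.symm)
    rw [HahnSeries.coeff_smul, coeff_single_of_ne hne]; simp
  · simp

lemma finsum_single_coeff_ne {r : ℕ} (a : Fin r → ℂ) (e : Fin r → ℤ) (d : ℤ)
    (hd : ∀ j, d ≠ e j) :
    (∑ j, a j • (single (e j) 1 : LS)).coeff d = 0 := by
  rw [coeff_sum]
  apply Finset.sum_eq_zero
  intro j _
  rw [HahnSeries.coeff_smul, coeff_single_of_ne (hd j)]; simp

lemma li_single {r : ℕ} (e : Fin r → ℤ) (he : Function.Injective e) :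
    LinearIndependent ℂ (fun k => (single (e k) 1 : LS)) := by
  rw [Fintype.linearIndependent_iff]
  intro a ha k
  have h := congrArg (fun f : LS => f.coeff (e k)) ha
  rw [finsum_single_coeff_self a e he k, HahnSeries.coeff_zero] at h
  exact h

lemma lead_coeff (m : ℕ) (lam : Fin m → ℂ) (c : (ℕ ⊕ (ℕ ⊕ ℕ)) →₀ ℂ) (r : ℤ)
    (hne : ∃ idx ∈ c.support, oIdx m idx % 3 = r) :
    ∃ idx ∈ c.support, oIdx m idx % 3 = r ∧
      (∀ jdx ∈ c.support, oIdx m jdx % 3 = r → oIdx m idx ≤ oIdx m jdx) ∧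
      (c.sum fun i a => a • gIdx m lam i).coeff (oIdx m idx) = c idx := by
  classical
  obtain ⟨idx₀, h₀s, h₀r⟩ := hne
  obtain ⟨jdx, hjs, hjmin⟩ := Finset.exists_min_image
    (c.support.filter fun idx => oIdx m idx % 3 = r) (oIdx m)
    ⟨idx₀, Finset.mem_filter.2 ⟨h₀s, h₀r⟩⟩
  rw [Finset.mem_filter] at hjs
  refine ⟨jdx, hjs.1, hjs.2, fun kdx hks hkr => hjmin kdx (Finset.mem_filter.2 ⟨hks, hkr⟩), ?_⟩
  apply sum_coeff_eq_single _ _ _ jdx ?_ (g_coeff_self m lam jdx)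
  intro kdx hks hkne
  by_contra hk
  obtain ⟨hle, hmod⟩ := g_coeff_ne m lam hk
  have hkr : oIdx m kdx % 3 = r := by rw [← hmod, hjs.2]
  have hge := hjmin kdx (Finset.mem_filter.2 ⟨hks, hkr⟩)
  exact hkne (oIdx_inj m (le_antisymm hle hge))

def Kker (m : ℕ) : Submodule ℂ LS :=
  Submodule.span ℂ (Set.range fun k : Fin m => (single (3*(m:ℤ) - 3*(k:ℤ)) 1 : LS))

def Wc (m : ℕ) : Submodule ℂ LS :=
  Submodule.span ℂ (Set.range fun k : Fin m => (single (-(3*(k:ℤ)+2)) 1 : LS))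

def Tm (m : ℕ) (lam : Fin m → ℂ) : Submodule ℂ LS :=
  Submodule.map trunc (Submodule.span ℂ (S1 m lam))

lemma g_mem (m : ℕ) (lam : Fin m → ℂ) (idx : ℕ ⊕ (ℕ ⊕ ℕ)) :
    gIdx m lam idx ∈ Submodule.span ℂ (S1 m lam) :=
  Submodule.subset_span (by rw [S1_eq]; exact ⟨idx, rfl⟩)


lemma ker_eq (m : ℕ) (lam : Fin m → ℂ) :
    Submodule.span ℂ (S1 m lam) ⊓ LinearMap.ker trunc = Kker m := by
  classical
  apply le_antisymm
  · intro x hx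
    obtain ⟨hxU, hxK'⟩ := Submodule.mem_inf.1 hx
    have hxK : trunc x = 0 := hxK'
    rw [S1_eq] at hxU
    obtain ⟨c, rfl⟩ := Finsupp.mem_span_range_iff_exists_finsupp.1 hxU
    have hcoeff0 : ∀ n : ℤ, n ≤ 0 →
        (c.sum fun i a => a • gIdx m lam i).coeff n = 0 := by
      intro n hn
      have h := congrArg (fun f : LS => f.coeff n) hxK
      rw [trunc_coeff, if_pos hn] at h
      rw [h, HahnSeries.coeff_zero]
    have hpos : ∀ idx ∈ c.support, 0 < oIdx m idx := by
      intro idx hidx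
      by_contra hle
      push_neg at hle
      obtain ⟨jdx, hjs, hjr, hjmin, hlead⟩ :=
        lead_coeff m lam c (oIdx m idx % 3) ⟨idx, hidx, rfl⟩
      have hj0 : oIdx m jdx ≤ 0 := le_trans (hjmin idx hidx rfl) hle
      have h0 := hcoeff0 _ hj0
      rw [hlead] at h0
      exact Finsupp.mem_support_iff.1 hjs h0
    rw [Finsupp.sum]
    apply Submodule.sum_mem
    intro idx hidx
    have := hpos idx hidx
    rcases idx with i | i | i
    · simp only [oIdx] at this
      have hi : i < m := by omega
      apply Submodule.smul_mem
      apply Submodule.subset_span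
      exact ⟨⟨i, hi⟩, rfl⟩
    · simp only [oIdx] at this; omega
    · simp only [oIdx] at this; omega
  · rw [Kker, Submodule.span_le]
    rintro x ⟨k, rfl⟩
    have hk : (k:ℕ) < m := k.isLt
    refine Submodule.mem_inf.2 ⟨?_, ?_⟩
    · exact g_mem m lam (.inl (k:ℕ))
    · rw [LinearMap.mem_ker]
      exact trunc_single_pos (by omega)

lemma disj (m : ℕ) (lam : Fin m → ℂ) : Disjoint (Tm m lam) (Wc m) := by
  classical
  rw [Submodule.disjoint_def]
  intro x hxT hxW
  obtain ⟨u, huU, rfl⟩ := hxT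
  rw [S1_eq] at huU
  obtain ⟨c, rfl⟩ := Finsupp.mem_span_range_iff_exists_finsupp.1 huU
  set u := c.sum fun i a => a • gIdx m lam i with hu
  obtain ⟨a, ha⟩ := (Submodule.mem_span_range_iff_exists_fun ℂ).1 hxW
  have h3 : ∀ idx ∈ c.support, oIdx m idx % 3 ≠ 1 := by
    intro idx hidx hr
    obtain ⟨jdx, hjs, hjr, hjmin, hlead⟩ := lead_coeff m lam c 1 ⟨idx, hidx, hr⟩
    have hj0 : oIdx m jdx ≤ -3*(m:ℤ) - 2 := by
      rcases jdx with i | i | i <;> simp only [oIdx] at hjr ⊢ <;> omega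
    have hcd : (trunc u).coeff (oIdx m jdx) = c jdx := by
      rw [trunc_coeff, if_pos (by omega), hlead]
    have hw : (trunc u).coeff (oIdx m jdx) = 0 := by
      rw [← ha]
      apply finsum_single_coeff_ne
      intro j
      have := j.isLt
      omega
    rw [hcd] at hw
    exact Finsupp.mem_support_iff.1 hjs hw
  have hures : ∀ n : ℤ, n % 3 = 1 → u.coeff n = 0 := by
    intro n hn
    rw [hu, finsupp_sum_coeff, Finsupp.sum]
    apply Finset.sum_eq_zero
    intro idx hidx
    have hg : (gIdx m lam idx).coeff n = 0 := by
      by_contra hc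
      obtain ⟨_, hmod⟩ := g_coeff_ne m lam hc
      exact h3 idx hidx (by omega)
    rw [hg, mul_zero]
  have ha0 : ∀ k : Fin m, a k = 0 := by
    intro k
    have h1 : (trunc u).coeff (-(3*(k:ℤ)+2)) = a k := by
      rw [← ha]
      apply finsum_single_coeff_self
      intro p q hpq
      simp only at hpq
      have hpq' : (p:ℤ) = (q:ℤ) := by linarith
      exact Fin.ext (by exact_mod_cast hpq')
    have h2 : (trunc u).coeff (-(3*(k:ℤ)+2)) = 0 := by
      rw [trunc_coeff, if_pos (by omega)]
      exact hures _ (by omega)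
    rw [h1] at h2
    exact h2
  rw [← ha]
  apply Finset.sum_eq_zero
  intro k _
  rw [ha0 k, zero_smul]

lemma step_elem (m : ℕ) (hm : 1 ≤ m) (lam : Fin m → ℂ) (n : ℤ) (hn : n ≤ 0) :
    ∃ h : LS, h ∈ Tm m lam ⊔ Wc m ∧ h.coeff n = 1 ∧
      ∀ k, h.coeff k ≠ 0 → n ≤ k ∧ k ≤ 0 := by
  have hmem : ∀ idx, trunc (gIdx m lam idx) ∈ Tm m lam ⊔ Wc m := fun idx =>
    Submodule.mem_sup_left (Submodule.mem_map_of_mem (g_mem m lam idx))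
  rcases (by omega : n % 3 = 0 ∨ n % 3 = 2 ∨ n % 3 = 1) with h0 | h2 | h1
  · obtain ⟨i, hi⟩ : ∃ i : ℕ, n = 3*(m:ℤ) - 3*(i:ℤ) := ⟨m + (-(n/3)).toNat, by omega⟩
    refine ⟨single n 1, ?_, coeff_single_same _ _, ?_⟩
    · have heq : (single n (1:ℂ) : LS) = trunc (gIdx m lam (.inl i)) := by
        rw [show gIdx m lam (.inl i) = single (3*(m:ℤ) - 3*(i:ℤ)) 1 from rfl, ← hi,
          trunc_single_nonpos hn]
      rw [heq]; exact hmem _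
    · intro k hk
      have : k = n := by
        by_contra hc
        rw [coeff_single_of_ne hc] at hk
        exact hk rfl
      omega
  · obtain ⟨i, hi⟩ : ∃ i : ℕ, n = -1 - 3*(i:ℤ) := ⟨(-(n+1)/3).toNat, by omega⟩
    refine ⟨trunc (gIdx m lam (.inr (.inl i))), hmem _, ?_, ?_⟩
    · rw [trunc_coeff, if_pos hn]
      have := g_coeff_self m lam (.inr (.inl i))
      rw [show oIdx m (.inr (.inl i)) = -1 - 3*(i:ℤ) from rfl] at this
      rw [hi]; exact this
    · intro k hk
      rw [trunc_coeff] at hk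
      by_cases hk0 : k ≤ 0
      · rw [if_pos hk0] at hk
        obtain ⟨hle, _⟩ := g_coeff_ne m lam hk
        rw [show oIdx m (.inr (.inl i)) = -1 - 3*(i:ℤ) from rfl] at hle
        omega
      · rw [if_neg hk0] at hk; exact absurd rfl hk
  · by_cases hcase : -3*(m:ℤ) + 1 ≤ n
    · obtain ⟨k, hkm, hkn⟩ : ∃ k : ℕ, k < m ∧ n = -(3*(k:ℤ)+2) :=
        ⟨(-(n+2)/3).toNat, by omega, by omega⟩
      refine ⟨single n 1, Submodule.mem_sup_right ?_, coeff_single_same _ _, ?_⟩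
      · apply Submodule.subset_span
        refine ⟨⟨k, hkm⟩, ?_⟩
        rw [hkn]
      · intro k' hk'
        have : k' = n := by
          by_contra hc
          rw [coeff_single_of_ne hc] at hk'
          exact hk' rfl
        omega
    · obtain ⟨i, hi⟩ : ∃ i : ℕ, n = -3*(m:ℤ) - 2 - 3*(i:ℤ) :=
        ⟨((-3*(m:ℤ)-2-n)/3).toNat, by omega⟩
      refine ⟨trunc (gIdx m lam (.inr (.inr i))), hmem _, ?_, ?_⟩
      · rw [trunc_coeff, if_pos hn]
        have := g_coeff_self m lam (.inr (.inr i))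
        rw [show oIdx m (.inr (.inr i)) = -3*(m:ℤ) - 2 - 3*(i:ℤ) from rfl] at this
        rw [hi]; exact this
      · intro k hk
        rw [trunc_coeff] at hk
        by_cases hk0 : k ≤ 0
        · rw [if_pos hk0] at hk
          obtain ⟨hle, _⟩ := g_coeff_ne m lam hk
          rw [show oIdx m (.inr (.inr i)) = -3*(m:ℤ) - 2 - 3*(i:ℤ) from rfl] at hle
          omega
        · rw [if_neg hk0] at hk; exact absurd rfl hk

lemma sup_ge (m : ℕ) (hm : 1 ≤ m) (lam : Fin m → ℂ) : Vphi ≤ Tm m lam ⊔ Wc m := by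
  have main : ∀ N : ℕ, ∀ x : LS, (∀ k, x.coeff k ≠ 0 → -(N:ℤ) ≤ k ∧ k ≤ 0) →
      x ∈ Tm m lam ⊔ Wc m := by
    intro N
    induction N with
    | zero =>
      intro x hx
      have hx0 : x = x.coeff 0 • (single (0:ℤ) 1 : LS) := by
        ext k
        rw [HahnSeries.coeff_smul]
        by_cases hk : k = (0:ℤ)
        · subst hk; rw [coeff_single_same]; simp
        · rw [coeff_single_of_ne hk]
          simp only [smul_eq_mul, mul_zero]
          by_contra hc
          have := hx k hc
          omega
      rw [hx0]
      apply Submodule.smul_mem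
      apply Submodule.mem_sup_left
      have heq : (single (0:ℤ) (1:ℂ) : LS) = trunc (gIdx m lam (.inl m)) := by
        rw [show gIdx m lam (.inl m) = single (3*(m:ℤ) - 3*(m:ℤ)) 1 from rfl]
        rw [show 3*(m:ℤ) - 3*(m:ℤ) = 0 by ring, trunc_single_nonpos le_rfl]
      rw [heq]
      exact Submodule.mem_map_of_mem (g_mem m lam _)
    | succ N ih =>
      intro x hx
      obtain ⟨h, hhmem, hh1, hhsupp⟩ := step_elem m hm lam (-(N+1:ℤ)) (by omega)
      have hx' : ∀ k, (x - x.coeff (-(N+1:ℤ)) • h).coeff k ≠ 0 → -(N:ℤ) ≤ k ∧ k ≤ 0 := by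
        intro k hk
        rw [HahnSeries.coeff_sub, HahnSeries.coeff_smul] at hk
        by_cases hkn : k = -(N+1:ℤ)
        · subst hkn
          rw [hh1] at hk
          simp at hk
        · have h1 : x.coeff k ≠ 0 ∨ h.coeff k ≠ 0 := by
            by_contra hcc
            push_neg at hcc
            rw [hcc.1, hcc.2] at hk
            simp at hk
          rcases h1 with h1 | h1
          · have := hx k h1
            constructor <;> [omega; omega]
          · have := hhsupp k h1
            constructor <;> [omega; omega]
      have hmem' := ih _ hx'
      have hxeq : x = (x - x.coeff (-(N+1:ℤ)) • h) + x.coeff (-(N+1:ℤ)) • h := by ring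
      rw [hxeq]
      exact Submodule.add_mem _ hmem' (Submodule.smul_mem _ _ hhmem)
  rintro x ⟨w, rfl⟩
  by_cases hw : trunc w = 0
  · rw [hw]; exact Submodule.zero_mem _
  · apply main ((-(w.order)).toNat)
    intro k hk
    rw [trunc_coeff] at hk
    by_cases hk0 : k ≤ 0
    · rw [if_pos hk0] at hk
      have horder := HahnSeries.order_le_of_coeff_ne_zero hk
      constructor
      · omega
      · exact hk0
    · rw [if_neg hk0] at hk; exact absurd rfl hk

end SatoAux

open SatoAux

/-- the span of the basis (9.4) — the image
`ι(U_a(X^aff_sing))` of the affine ring of the singular rational curve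
`y³ = x ∏_{j=1}^m (x-λ_j³)³` — is a point of the Sato Grassmannian. -/
theorem singular_trigonal_affine_ring_mem_UGM (m : ℕ) (hm : 1 ≤ m)
    (lam : Fin m → ℂ) (hne : ∀ j, lam j ^ 3 ≠ 0)
    (hinj : Function.Injective fun j => lam j ^ 3) :
    Submodule.span ℂ (S1 m lam) ∈ UGM := by
  classical
  set U := Submodule.span ℂ (S1 m lam) with hUdef
  -- kernel
  have hker : LinearMap.ker (projU U) = Submodule.comap U.subtype (U ⊓ LinearMap.ker trunc) := by
    erw [projU, LinearMap.ker_comp, LinearMap.ker_rangeRestrict]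
    ext x
    simp only [Submodule.mem_comap, Submodule.mem_inf, Submodule.subtype_apply]
    exact ⟨fun h => ⟨x.2, h⟩, fun h => h.2⟩
  have hker2 : U ⊓ LinearMap.ker trunc = Kker m := ker_eq m lam
  let eK : ↥(LinearMap.ker (projU U)) ≃ₗ[ℂ] ↥(Kker m) :=
    (LinearEquiv.ofEq _ _ hker).trans
      ((Submodule.comapSubtypeEquivOfLe inf_le_left).trans (LinearEquiv.ofEq _ _ hker2))
  have hKli : LinearIndependent ℂ
      (fun k : Fin m => (HahnSeries.single (3*(m:ℤ) - 3*(k:ℤ)) 1 : LaurentSeries ℂ)) := by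
    apply li_single
    intro p q h
    simp only at h
    have h' : (p:ℤ) = (q:ℤ) := by linarith
    exact Fin.ext (by exact_mod_cast h')
  have hKfd : FiniteDimensional ℂ ↥(Kker m) :=
    FiniteDimensional.span_of_finite ℂ (Set.finite_range _)
  have hKrank : Module.finrank ℂ ↥(Kker m) = m := by
    unfold Kker
    rw [finrank_span_eq_card hKli, Fintype.card_fin]
  -- cokernel
  have hwmem : ∀ k : Fin m,
      (HahnSeries.single (-(3*(k:ℤ)+2)) 1 : LaurentSeries ℂ) ∈ Vphi := by
    intro k
    refine ⟨HahnSeries.single (-(3*(k:ℤ)+2)) 1, trunc_eq_self ?_⟩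
    intro n hn
    by_contra hc
    rw [HahnSeries.coeff_single_of_ne (by omega : n ≠ -(3*(k:ℤ)+2))] at hn
    exact hn rfl
  let wv : Fin m → ↥Vphi := fun k => ⟨_, hwmem k⟩
  let WV : Submodule ℂ ↥Vphi := Submodule.span ℂ (Set.range wv)
  have hcomp : Vphi.subtype.comp trunc.rangeRestrict = trunc :=
    LinearMap.subtype_comp_codRestrict _ _ _
  have hmapT : Submodule.map Vphi.subtype (LinearMap.range (projU U)) = Tm m lam := by
    erw [projU, LinearMap.range_comp, Submodule.range_subtype, ← Submodule.map_comp, hcomp]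
    rfl
  have hmapW : Submodule.map Vphi.subtype WV = Wc m := by
    show Submodule.map Vphi.subtype (Submodule.span ℂ (Set.range wv)) = Wc m
    rw [Submodule.map_span, ← Set.range_comp]
    rfl
  have hdisj := disj m lam
  have hsup := sup_ge m hm lam
  have hcompl : IsCompl (LinearMap.range (projU U)) WV := by
    constructor
    · rw [Submodule.disjoint_def]
      intro x hx1 hx2
      have h1 : (x : LaurentSeries ℂ) ∈ Tm m lam := hmapT ▸ Submodule.mem_map_of_mem hx1
      have h2 : (x : LaurentSeries ℂ) ∈ Wc m := hmapW ▸ Submodule.mem_map_of_mem hx2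
      have h0 := Submodule.disjoint_def.1 hdisj _ h1 h2
      exact Subtype.ext h0
    · rw [codisjoint_iff, Submodule.eq_top_iff']
      intro x
      have hx : (x : LaurentSeries ℂ) ∈ Tm m lam ⊔ Wc m := hsup x.2
      rw [← hmapT, ← hmapW, ← Submodule.map_sup] at hx
      obtain ⟨y, hy, hyx⟩ := hx
      exact (Subtype.ext hyx : y = x) ▸ hy
  let eC : (↥Vphi ⧸ LinearMap.range (projU U)) ≃ₗ[ℂ] ↥WV :=
    Submodule.quotientEquivOfIsCompl (LinearMap.range (projU U)) WV hcompl
  have hWli : LinearIndependent ℂ wv := by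
    have h2 : LinearIndependent ℂ
        (fun k : Fin m => (HahnSeries.single (-(3*(k:ℤ)+2)) 1 : LaurentSeries ℂ)) := by
      apply li_single
      intro p q h
      simp only at h
      have h' : (p:ℤ) = (q:ℤ) := by linarith
      exact Fin.ext (by exact_mod_cast h')
    exact LinearIndependent.of_comp Vphi.subtype h2
  have hWfd : FiniteDimensional ℂ ↥WV :=
    FiniteDimensional.span_of_finite ℂ (Set.finite_range wv)
  have hWrank : Module.finrank ℂ ↥WV = m := by
    show Module.finrank ℂ ↥(Submodule.span ℂ (Set.range wv)) = m
    rw [finrank_span_eq_card hWli, Fintype.card_fin]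
  refine ⟨?_, ?_, ?_⟩
  · exact eK.symm.finiteDimensional
  · exact eC.symm.finiteDimensional
  · rw [LinearEquiv.finrank_eq eK, LinearEquiv.finrank_eq eC, hKrank, hWrank]

end
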